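/- Define, for convex C² Lagrangians L_j, L_i with L_j'', L_i'' ≥ γ > 0, the function ℰ₁(τ, y) = τ·L_j(−y/τ) − τ·c for τ ∈ (0,1] and y > 0 (with ℰ₁(τ,0)=0 for τ ∈ [0,1] and ℰ₁(0,y) = +∞ for y > 0), where c is a constant. Then ℰ₁ is lower semi-continuous on [0,1] × [0,∞). Moreover ℰ₁(τ,y) ≥ (γ/4)·y²/τ − C₀τ for τ > 0, where C₀ = max(0, c − min_j L_j(0) + γ₀²/γ) with γ₀ = |L_j'(0)|. -/

import Mathlib

open Set


lemma strongConvex (Lj : ℝ → ℝ) (γ : ℝ) (hLj : ContDiff ℝ 2 Lj)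
    (hLj'' : ∀ ξ : ℝ, γ ≤ iteratedDeriv 2 Lj ξ) :
    ∀ ξ : ℝ, Lj 0 + deriv Lj 0 * ξ + γ / 2 * ξ ^ 2 ≤ Lj ξ := by
  have hd1 : Differentiable ℝ Lj := hLj.differentiable (by norm_num)
  have hd2 : Differentiable ℝ (deriv Lj) := by
    have h : ContDiff ℝ ((1:ℕ∞)+1) Lj := by exact_mod_cast hLj
    exact ((contDiff_succ_iff_deriv.mp h).2.2).differentiable (by simp)
  have hdd : deriv (deriv Lj) = iteratedDeriv 2 Lj := by
    rw [iteratedDeriv_succ, iteratedDeriv_one]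
  set ψ : ℝ → ℝ := fun ξ => deriv Lj ξ - deriv Lj 0 - γ * ξ with hψ
  have hψd : ∀ ξ : ℝ, HasDerivAt ψ (iteratedDeriv 2 Lj ξ - γ) ξ := by
    intro ξ
    have h1 : HasDerivAt (deriv Lj) (iteratedDeriv 2 Lj ξ) ξ := by
      have := (hd2 ξ).hasDerivAt
      rwa [hdd] at this
    have h2 : HasDerivAt (fun ξ : ℝ => γ * ξ) γ ξ := by
      simpa using (hasDerivAt_id ξ).const_mul γ
    exact (h1.sub_const (deriv Lj 0)).sub h2
  have hψ0 : ψ 0 = 0 := by simp [hψ]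
  have hψmono : Monotone ψ :=
    monotone_of_deriv_nonneg (fun ξ => (hψd ξ).differentiableAt)
      (fun ξ => by rw [(hψd ξ).deriv]; linarith [hLj'' ξ])
  set φ : ℝ → ℝ := fun ξ => Lj ξ - deriv Lj 0 * ξ - γ / 2 * ξ ^ 2 with hφ
  have hφd : ∀ ξ : ℝ, HasDerivAt φ (ψ ξ) ξ := by
    intro ξ
    have h1 := (hd1 ξ).hasDerivAt
    have h2 : HasDerivAt (fun ξ : ℝ => deriv Lj 0 * ξ) (deriv Lj 0) ξ := by
      simpa using (hasDerivAt_id ξ).const_mul (deriv Lj 0)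
    have h3 : HasDerivAt (fun ξ : ℝ => γ / 2 * ξ ^ 2) (γ * ξ) ξ := by
      have := (hasDerivAt_pow 2 ξ).const_mul (γ / 2)
      exact this.congr_deriv (by norm_num; ring)
    exact (h1.sub h2).sub h3
  have hmono : MonotoneOn φ (Ici 0) := by
    apply monotoneOn_of_deriv_nonneg (convex_Ici 0)
      (fun ξ _ => (hφd ξ).differentiableAt.continuousAt.continuousWithinAt)
      (fun ξ _ => (hφd ξ).differentiableAt.differentiableWithinAt)
    intro x hx
    rw [interior_Ici] at hx
    rw [(hφd x).deriv]
    calc (0:ℝ) = ψ 0 := hψ0.symm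
    _ ≤ ψ x := hψmono (le_of_lt hx)
  have hanti : AntitoneOn φ (Iic 0) := by
    apply antitoneOn_of_deriv_nonpos (convex_Iic 0)
      (fun ξ _ => (hφd ξ).differentiableAt.continuousAt.continuousWithinAt)
      (fun ξ _ => (hφd ξ).differentiableAt.differentiableWithinAt)
    intro x hx
    rw [interior_Iic] at hx
    rw [(hφd x).deriv]
    calc ψ x ≤ ψ 0 := hψmono (le_of_lt hx)
    _ = 0 := hψ0
  intro ξ
  have hkey : φ 0 ≤ φ ξ := by
    rcases le_total 0 ξ with h | h
    · exact hmono (mem_Ici.mpr le_rfl) (mem_Ici.mpr h) h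
    · exact hanti (mem_Iic.mpr h) (mem_Iic.mpr le_rfl) h
  have hφ0 : φ 0 = Lj 0 := by simp [hφ]
  rw [hφ0] at hkey
  simp only [hφ] at hkey
  linarith


lemma lowerBd (Lj : ℝ → ℝ) (γ c C₀ : ℝ) (hγ : 0 < γ)
    (hsc : ∀ ξ : ℝ, Lj 0 + deriv Lj 0 * ξ + γ / 2 * ξ ^ 2 ≤ Lj ξ)
    (hC1 : c - Lj 0 + |deriv Lj 0| ^ 2 / γ ≤ C₀) :
    ∀ τ : ℝ, 0 < τ → ∀ y : ℝ, 0 ≤ y →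
      γ / 4 * y ^ 2 / τ - C₀ * τ ≤ τ * Lj (-y / τ) - τ * c := by
  intro τ hτ y hy
  obtain ⟨a, ha⟩ : ∃ a : ℝ, a = |deriv Lj 0| := ⟨_, rfl⟩
  rw [← ha] at hC1
  have ha0 : 0 ≤ a := ha ▸ abs_nonneg _
  have hL0 : deriv Lj 0 ≤ a := ha ▸ le_abs_self _
  have hL0' : -a ≤ deriv Lj 0 := ha ▸ neg_abs_le _
  have hkey := hsc (-y / τ)
  -- multiply by τ
  have h1 : τ * (Lj 0 + deriv Lj 0 * (-y / τ) + γ / 2 * (-y / τ) ^ 2) ≤ τ * Lj (-y / τ) :=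
    mul_le_mul_of_nonneg_left hkey (le_of_lt hτ)
  have h2 : τ * (deriv Lj 0 * (-y / τ)) = -(deriv Lj 0 * y) := by
    field_simp
  have h3 : τ * (γ / 2 * (-y / τ) ^ 2) = γ / 2 * y ^ 2 / τ := by
    field_simp
  -- AM-GM : a * y ≤ γ/4 * y^2/τ + τ * a^2/γ
  have h4 : a * y ≤ γ / 4 * y ^ 2 / τ + τ * a ^ 2 / γ := by
    rw [div_add_div _ _ (ne_of_gt hτ) (ne_of_gt hγ), le_div_iff₀ (by positivity)]
    nlinarith [sq_nonneg (γ * y - 2 * τ * a)]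
  -- C₀ bound multiplied by τ
  have h5 : τ * (c - Lj 0) + τ * a ^ 2 / γ ≤ C₀ * τ := by
    have := mul_le_mul_of_nonneg_left hC1 (le_of_lt hτ)
    calc τ * (c - Lj 0) + τ * a ^ 2 / γ = τ * (c - Lj 0 + a ^ 2 / γ) := by ring
    _ ≤ τ * C₀ := this
    _ = C₀ * τ := by ring
  rw [mul_add, mul_add, h2, h3] at h1
  have h6 : deriv Lj 0 * y ≤ a * y := mul_le_mul_of_nonneg_right hL0 hy
  have h7 : γ / 2 * y ^ 2 / τ = γ / 4 * y ^ 2 / τ + γ / 4 * y ^ 2 / τ := by ring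
  rw [h7] at h1
  linarith


set_option maxHeartbeats 1000000 in
theorem E1_lsc_and_lower_bound
    (Lj : ℝ → ℝ) (γ c : ℝ) (hγ : 0 < γ) (hLj : ContDiff ℝ 2 Lj)
    (hLj'' : ∀ ξ : ℝ, γ ≤ iteratedDeriv 2 Lj ξ)
    (hc : c ≤ Lj 0)
    (E1 : ℝ → ℝ → EReal)
    (hE1zero : ∀ τ : ℝ, E1 τ 0 = 0)
    (hE1pos : ∀ τ y : ℝ, 0 < τ → 0 < y →
      E1 τ y = ((τ * Lj (-y / τ) - τ * c : ℝ) : EReal))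
    (hE1top : ∀ y : ℝ, 0 < y → E1 0 y = ⊤)
    (C₀ : ℝ) (hC₀ : C₀ = max 0 (c - Lj 0 + |deriv Lj 0| ^ 2 / γ)) :
    LowerSemicontinuousOn (fun q : ℝ × ℝ => E1 q.1 q.2) (Icc 0 1 ×ˢ Ici 0) ∧
    ∀ τ ∈ Ioc (0 : ℝ) 1, ∀ y ∈ Ici (0 : ℝ),
      ((γ / 4 * y ^ 2 / τ - C₀ * τ : ℝ) : EReal) ≤ E1 τ y := by
  have hC₀0 : 0 ≤ C₀ := hC₀ ▸ le_max_left _ _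
  have hC₀1 : c - Lj 0 + |deriv Lj 0| ^ 2 / γ ≤ C₀ := hC₀ ▸ le_max_right _ _
  have lb := lowerBd Lj γ c C₀ hγ (strongConvex Lj γ hLj hLj'') hC₀1
  -- the generic lower bound in `EReal`, for all `τ > 0`, `y ≥ 0`
  have hge : ∀ p : ℝ × ℝ, 0 < p.1 → 0 ≤ p.2 →
      ((γ / 4 * p.2 ^ 2 / p.1 - C₀ * p.1 : ℝ) : EReal) ≤ E1 p.1 p.2 := by
    intro p hp1 hp2
    rcases eq_or_lt_of_le hp2 with h2 | h2
    · rw [← h2, hE1zero, ← EReal.coe_zero]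
      apply EReal.coe_le_coe_iff.mpr
      have hz : γ / 4 * (0:ℝ) ^ 2 / p.1 = 0 := by simp
      rw [hz]
      linarith [mul_nonneg hC₀0 (le_of_lt hp1)]
    · rw [hE1pos _ _ hp1 h2]
      exact EReal.coe_le_coe_iff.mpr (lb p.1 hp1 p.2 hp2)
  set g : ℝ × ℝ → ℝ := fun p => p.1 * Lj (-p.2 / p.1) - p.1 * c with hgdef
  clear_value g
  have hE1g : ∀ p : ℝ × ℝ, 0 < p.1 → 0 < p.2 → E1 p.1 p.2 = ((g p : ℝ) : EReal) := by
    intro p h1 h2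
    rw [hgdef]
    exact hE1pos p.1 p.2 h1 h2
  have hgc : ∀ p : ℝ × ℝ, p.1 ≠ 0 → ContinuousAt g p := by
    intro p hp
    have h1 : ContinuousAt (fun r : ℝ × ℝ => -r.2 / r.1) p :=
      (continuousAt_snd.neg).div continuousAt_fst hp
    rw [hgdef]
    exact (continuousAt_fst.mul ((hLj.continuous.continuousAt).comp h1)).sub
      (continuousAt_fst.mul continuousAt_const)
  constructor
  · -- lower semicontinuity
    intro q hq
    obtain ⟨hq1, hq2⟩ := mem_prod.mp hq
    have hq10 : (0:ℝ) ≤ q.1 := hq1.1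
    have hq20 : (0:ℝ) ≤ q.2 := hq2
    rcases eq_or_lt_of_le hq10 with hτ | hτ
    · -- q.1 = 0
      rcases eq_or_lt_of_le hq20 with hy | hy
      · -- q.1 = 0, q.2 = 0
        intro b hb
        change b < E1 q.1 q.2 at hb
        rw [← hy, hE1zero] at hb
        obtain ⟨m, hbm, hm0⟩ := exists_between hb
        set M := m.toReal with hMdef
        have hM : (M : EReal) = m := by
          rw [hMdef]
          exact EReal.coe_toReal (ne_of_lt (lt_of_lt_of_le hm0 le_top))
            ((lt_of_le_of_lt bot_le hbm).ne')
        clear_value M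
        have hM0 : M < 0 := by
          rw [← hM, ← EReal.coe_zero, EReal.coe_lt_coe_iff] at hm0
          exact hm0
        have hδr : ∃ δ : ℝ, δ = min 1 ((-M) / (C₀ + 1)) := ⟨_, rfl⟩
        obtain ⟨δ, hδdef⟩ := hδr
        have hδ0 : 0 < δ := hδdef ▸ lt_min one_pos (div_pos (by linarith) (by linarith))
        have hδ1 : δ ≤ 1 := hδdef ▸ min_le_left _ _
        have hd2 : δ * (C₀ + 1) ≤ -M := by
          have h : δ ≤ (-M) / (C₀ + 1) := hδdef ▸ min_le_right _ _
          calc δ * (C₀ + 1) ≤ ((-M) / (C₀ + 1)) * (C₀ + 1) :=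
                mul_le_mul_of_nonneg_right h (by linarith)
          _ = -M := by field_simp
        have hopen : ∀ᶠ p : ℝ × ℝ in nhds q, p.1 < δ := by
          have hop : IsOpen {p : ℝ × ℝ | p.1 < δ} := isOpen_lt continuous_fst continuous_const
          exact hop.eventually_mem (by rw [mem_setOf_eq, ← hτ]; exact hδ0)
        filter_upwards [hopen.filter_mono nhdsWithin_le_nhds,
          eventually_mem_nhdsWithin] with p hpδ hps
        show b < E1 p.1 p.2
        obtain ⟨hps1, hps2⟩ := mem_prod.mp hps
        rcases eq_or_lt_of_le hps1.1 with h1 | h1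
        · rcases eq_or_lt_of_le (mem_Ici.mp hps2) with h2 | h2
          · rw [← h2, hE1zero]; exact hb
          · rw [← h1, hE1top p.2 h2]; exact lt_of_lt_of_le hb le_top
        · have hMlt : M < γ / 4 * p.2 ^ 2 / p.1 - C₀ * p.1 := by
            have hnn : 0 ≤ γ / 4 * p.2 ^ 2 / p.1 :=
              div_nonneg (by positivity) (le_of_lt h1)
            nlinarith
          calc b < (M : EReal) := hM ▸ hbm
          _ < ((γ / 4 * p.2 ^ 2 / p.1 - C₀ * p.1 : ℝ) : EReal) :=
              EReal.coe_lt_coe_iff.mpr hMlt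
          _ ≤ E1 p.1 p.2 := hge p h1 hps2
      · -- q.1 = 0, q.2 > 0
        intro b hb
        change b < E1 q.1 q.2 at hb
        rw [show E1 q.1 q.2 = ⊤ by rw [← hτ]; exact hE1top q.2 hy] at hb
        obtain ⟨m, hbm, hmt⟩ := exists_between hb
        set M := m.toReal with hMdef
        have hM : (M : EReal) = m := by
          rw [hMdef]
          exact EReal.coe_toReal (ne_of_lt hmt) ((lt_of_le_of_lt bot_le hbm).ne')
        clear_value M
        have habs : 0 < |M| + C₀ + 1 := by
          have := abs_nonneg M; linarith
        obtain ⟨δ, hδdef⟩ : ∃ δ : ℝ, δ = min 1 (γ * q.2 ^ 2 / (16 * (|M| + C₀ + 1))) := ⟨_, rfl⟩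
        have hδ0 : 0 < δ :=
          hδdef ▸ lt_min one_pos (div_pos (by positivity) (by linarith))
        have hδ1 : δ ≤ 1 := hδdef ▸ min_le_left _ _
        have hd2 : δ * (|M| + C₀ + 1) ≤ γ * q.2 ^ 2 / 16 := by
          have h : δ ≤ γ * q.2 ^ 2 / (16 * (|M| + C₀ + 1)) := hδdef ▸ min_le_right _ _
          calc δ * (|M| + C₀ + 1)
              ≤ (γ * q.2 ^ 2 / (16 * (|M| + C₀ + 1))) * (|M| + C₀ + 1) :=
                mul_le_mul_of_nonneg_right h (by linarith)
          _ = γ * q.2 ^ 2 / 16 := by field_simp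
        have hopen : ∀ᶠ p : ℝ × ℝ in nhds q, q.2 / 2 < p.2 ∧ p.1 < δ := by
          have hop : IsOpen {p : ℝ × ℝ | q.2 / 2 < p.2 ∧ p.1 < δ} :=
            (isOpen_lt continuous_const continuous_snd).inter
              (isOpen_lt continuous_fst continuous_const)
          exact hop.eventually_mem ⟨by linarith, by rw [← hτ]; exact hδ0⟩
        filter_upwards [hopen.filter_mono nhdsWithin_le_nhds,
          eventually_mem_nhdsWithin] with p hp hps
        show b < E1 p.1 p.2
        obtain ⟨hp2, hp1δ⟩ := hp
        obtain ⟨hps1, hps2⟩ := mem_prod.mp hps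
        have hp2pos : 0 < p.2 := lt_trans (by linarith) hp2
        rcases eq_or_lt_of_le hps1.1 with h1 | h1
        · rw [← h1, hE1top p.2 hp2pos]
          exact lt_of_lt_of_le hbm le_top
        · have hMle : M ≤ |M| := le_abs_self M
          have e1 : M * p.1 ≤ |M| * δ := by
            nlinarith [mul_nonneg (sub_nonneg.mpr hMle) h1.le,
              mul_nonneg (abs_nonneg M) (sub_pos.mpr hp1δ).le]
          have e2 : C₀ * p.1 * p.1 ≤ C₀ * δ := by
            nlinarith [mul_nonneg (mul_nonneg hC₀0 h1.le) (sub_pos.mpr hp1δ).le,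
              mul_nonneg (mul_nonneg hC₀0 hδ0.le) (sub_pos.mpr hp1δ).le,
              mul_nonneg (mul_nonneg hC₀0 hδ0.le) (sub_nonneg.mpr hδ1)]
          have e3 : γ * q.2 ^ 2 / 16 ≤ γ / 4 * p.2 ^ 2 := by
            nlinarith [mul_nonneg (mul_nonneg hγ.le (sub_pos.mpr hp2).le)
              (by linarith : (0:ℝ) ≤ p.2 + q.2 / 2)]
          have e4 : |M| * δ + C₀ * δ ≤ γ * q.2 ^ 2 / 16 - δ := by nlinarith [hd2]
          have hkey : (M + C₀ * p.1) * p.1 < γ / 4 * p.2 ^ 2 := by nlinarith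
          have hMlt : M < γ / 4 * p.2 ^ 2 / p.1 - C₀ * p.1 := by
            rw [lt_sub_iff_add_lt, lt_div_iff₀ h1]
            exact hkey
          calc b < (M : EReal) := hM ▸ hbm
          _ < ((γ / 4 * p.2 ^ 2 / p.1 - C₀ * p.1 : ℝ) : EReal) :=
              EReal.coe_lt_coe_iff.mpr hMlt
          _ ≤ E1 p.1 p.2 := hge p h1 (le_of_lt hp2pos)
    · -- q.1 > 0
      rcases eq_or_lt_of_le hq20 with hy | hy
      · -- q.1 > 0, q.2 = 0
        intro b hb
        change b < E1 q.1 q.2 at hb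
        rw [← hy, hE1zero] at hb
        set h : ℝ × ℝ → ℝ := fun p => min (g p) 0 with hhdef
        have hhc : ContinuousAt h q := (hgc q (ne_of_gt hτ)).min continuousAt_const
        have hgq : 0 ≤ g q := by
          have : g q = q.1 * Lj 0 - q.1 * c := by
            rw [hgdef]; simp [← hy]
          rw [this]
          nlinarith
        have hhq : h q = 0 := min_eq_right hgq
        have hb' : b < ((h q : ℝ) : EReal) := by
          rw [hhq, EReal.coe_zero]
          exact hb
        have hev1 : ∀ᶠ p : ℝ × ℝ in nhds q, b < ((h p : ℝ) : EReal) :=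
          ContinuousAt.eventually_lt continuousAt_const
            (continuous_coe_real_ereal.continuousAt.comp hhc) hb'
        have hev2 : ∀ᶠ p : ℝ × ℝ in nhds q, 0 < p.1 :=
          (isOpen_lt continuous_const continuous_fst).eventually_mem hτ
        filter_upwards [(hev1.and hev2).filter_mono nhdsWithin_le_nhds,
          eventually_mem_nhdsWithin] with p hp hps
        show b < E1 p.1 p.2
        obtain ⟨hpb, hp1⟩ := hp
        obtain ⟨hps1, hps2⟩ := mem_prod.mp hps
        rcases eq_or_lt_of_le (mem_Ici.mp hps2) with h2 | h2
        · rw [← h2, hE1zero]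
          refine lt_of_lt_of_le hpb ?_
          rw [← EReal.coe_zero]
          exact EReal.coe_le_coe_iff.mpr (min_le_right _ _)
        · rw [hE1g p hp1 h2]
          exact lt_of_lt_of_le hpb (EReal.coe_le_coe_iff.mpr (min_le_left _ _))
      · -- q.1 > 0, q.2 > 0
        intro b hb
        change b < E1 q.1 q.2 at hb
        have hb' : b < ((g q : ℝ) : EReal) := by rwa [hE1g q hτ hy] at hb
        have hev1 : ∀ᶠ p : ℝ × ℝ in nhds q, b < ((g p : ℝ) : EReal) :=
          ContinuousAt.eventually_lt continuousAt_const
            (continuous_coe_real_ereal.continuousAt.comp (hgc q (ne_of_gt hτ))) hb'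
        have hev2 : ∀ᶠ p : ℝ × ℝ in nhds q, 0 < p.1 ∧ 0 < p.2 := by
          have hop : IsOpen {p : ℝ × ℝ | 0 < p.1 ∧ 0 < p.2} :=
            (isOpen_lt continuous_const continuous_fst).inter
              (isOpen_lt continuous_const continuous_snd)
          exact hop.eventually_mem ⟨hτ, hy⟩
        filter_upwards [(hev1.and hev2).filter_mono nhdsWithin_le_nhds] with p hp
        show b < E1 p.1 p.2
        rw [hE1g p hp.2.1 hp.2.2]
        exact hp.1
  · -- the lower bound
    intro τ hτ y hy
    exact hge (τ, y) hτ.1 hy
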